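/- Fix a real constant 0 < r < 1 and a real sequence (a_m)_{m≥1}. If Σ_m r^m (a_{m+1} - a_m)^2 < ∞, then Σ_m r^m a_m^2 < ∞, and moreover there exist constants C_1, C_2 (depending only on r) with Σ_m r^m a_m^2 ≤ C_1 a_1^2 + C_2 Σ_m r^m (a_{m+1} - a_m)^2. Conversely, if Σ_m r^m a_m^2 < ∞ then Σ_m r^m (a_{m+1} - a_m)^2 < ∞. -/

import Mathlib

lemma young_aux (ε x y : ℝ) (hε : 0 < ε) :
    (x + y)^2 ≤ (1+ε)*x^2 + (1+1/ε)*y^2 := by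
  have h : (1+1/ε)*y^2 = y^2 + y^2/ε := by field_simp
  rw [h]
  have key : (1+ε)*x^2 + (y^2 + y^2/ε) - (x+y)^2 = (ε*x - y)^2 / ε := by
    field_simp; ring
  rw [← sub_nonneg, key]
  positivity

/-- for 0 < r < 1, summability of r^m (a_{m+1}-a_m)^2 (m ≥ 1) implies
summability of r^m a_m^2 with an explicit bound (constants depending only on r),
and conversely. -/
theorem stmt2 (r : ℝ) (hr0 : 0 < r) (hr1 : r < 1) :
    ∃ C₁ C₂ : ℝ, ∀ a : ℕ → ℝ,
      ((Summable (fun m : ℕ => r^(m+1) * (a (m+2) - a (m+1))^2) →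
        Summable (fun m : ℕ => r^(m+1) * (a (m+1))^2) ∧
        (∑' m : ℕ, r^(m+1) * (a (m+1))^2) ≤
          C₁ * (a 1)^2 + C₂ * ∑' m : ℕ, r^(m+1) * (a (m+2) - a (m+1))^2) ∧
      (Summable (fun m : ℕ => r^(m+1) * (a (m+1))^2) →
        Summable (fun m : ℕ => r^(m+1) * (a (m+2) - a (m+1))^2))) := by
  set t : ℝ := (1+r)/2 with ht
  have ht0 : 0 < t := by positivity
  have ht1 : t < 1 := by rw [ht]; linarith
  have h1t : 0 < 1 - t := by linarith
  set K : ℝ := r*(1+r)/(1-r) with hK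
  have hr1' : 0 < 1 - r := by linarith
  have hK0 : 0 < K := by positivity
  refine ⟨r/(1-t), K/(1-t), fun a => ?_⟩
  set b : ℕ → ℝ := fun m => r^(m+1) * (a (m+1))^2 with hb
  set g : ℕ → ℝ := fun m => r^(m+1) * (a (m+2) - a (m+1))^2 with hg
  have hbnn : ∀ m, 0 ≤ b m := fun m => by positivity
  have hgnn : ∀ m, 0 ≤ g m := fun m => by positivity
  constructor
  · intro hgs
    set D : ℝ := ∑' m : ℕ, g m with hD
    have hD0 : 0 ≤ D := tsum_nonneg hgnn
    set B : ℝ := r/(1-t)*(a 1)^2 + K/(1-t)*D with hB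
    have hB0 : 0 ≤ B := by positivity
    have hBeq : (1-t)*B = r*(a 1)^2 + K*D := by
      rw [hB]; field_simp
    -- key pointwise recursion
    have hkey : ∀ m : ℕ, b (m+1) ≤ t * b m + K * g m := by
      intro m
      have hε : (0:ℝ) < (1-r)/(2*r) := by positivity
      have hy := young_aux ((1-r)/(2*r)) (a (m+1)) (a (m+2) - a (m+1)) hε
      have hx : a (m+1) + (a (m+2) - a (m+1)) = a (m+2) := by ring
      rw [hx] at hy
      have hrp : (0:ℝ) < r^(m+2) := by positivity
      have := mul_le_mul_of_nonneg_left hy (le_of_lt hrp)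
      calc b (m+1) = r^(m+2) * (a (m+2))^2 := rfl
        _ ≤ r^(m+2) * ((1+(1-r)/(2*r))*(a (m+1))^2 + (1+1/((1-r)/(2*r)))*(a (m+2) - a (m+1))^2) := this
        _ = t * b m + K * g m := by
            simp only [hb, hg, hK, ht]
            rw [pow_succ]
            field_simp
            ring
    -- partial sums bounded
    have hsum : ∀ N : ℕ, ∑ m ∈ Finset.range N, b m ≤ B := by
      intro N
      induction N with
      | zero => simpa using hB0
      | succ N ih =>
        rw [Finset.sum_range_succ']
        have h2 : ∑ m ∈ Finset.range N, b (m+1) ≤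
            t * ∑ m ∈ Finset.range N, b m + K * ∑ m ∈ Finset.range N, g m := by
          rw [Finset.mul_sum, Finset.mul_sum, ← Finset.sum_add_distrib]
          exact Finset.sum_le_sum fun m _ => hkey m
        have h3 : ∑ m ∈ Finset.range N, g m ≤ D :=
          Summable.sum_le_tsum _ (fun m _ => hgnn m) hgs
        have h4 : t * ∑ m ∈ Finset.range N, b m ≤ t * B :=
          mul_le_mul_of_nonneg_left ih (le_of_lt ht0)
        have h5 : K * ∑ m ∈ Finset.range N, g m ≤ K * D :=
          mul_le_mul_of_nonneg_left h3 (le_of_lt hK0)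
        have hb0 : b 0 = r * (a 1)^2 := by simp [hb]
        nlinarith [h2, h4, h5]
    have hbs : Summable b := summable_of_sum_range_le hbnn hsum
    exact ⟨hbs, Summable.tsum_le_of_sum_range_le hbs hsum⟩
  · intro hbs
    have hbs1 : Summable (fun m => b (m+1)) := (summable_nat_add_iff 1).2 hbs
    have hmaj : Summable (fun m => (2/r) * b (m+1) + 2 * b m) :=
      (hbs1.mul_left _).add (hbs.mul_left _)
    refine hmaj.of_nonneg_of_le hgnn fun m => ?_
    have h1 : (2/r) * b (m+1) = 2 * r^(m+1) * (a (m+2))^2 := by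
      simp only [hb]
      rw [pow_succ]
      field_simp
    have h2 : (a (m+2) - a (m+1))^2 ≤ 2*(a (m+2))^2 + 2*(a (m+1))^2 := by nlinarith [sq_nonneg (a (m+2) + a (m+1))]
    have hrp : (0:ℝ) < r^(m+1) := by positivity
    calc g m = r^(m+1) * (a (m+2) - a (m+1))^2 := rfl
      _ ≤ r^(m+1) * (2*(a (m+2))^2 + 2*(a (m+1))^2) :=
          mul_le_mul_of_nonneg_left h2 (le_of_lt hrp)
      _ = (2/r) * b (m+1) + 2 * b m := by rw [h1]; simp only [hb]; ring
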